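/- Let (Ω, 𝒜, P) be a probability space, (Xₙ)_{n≥1} a sequence of nonnegative real-valued random variables, and ℱ ⊆ 𝒜 a sub-σ-field. Suppose there is an ℱ-measurable random variable M such that E[Xₙ | ℱ] ≤ M almost surely for all n ≥ 1. Let N be a random variable with values in ℕ (positive integers) such that for all n, E[Xₙ · 1_{N ≥ n} | ℱ] = E[Xₙ | ℱ] · E[1_{N ≥ n} | ℱ] almost surely. Then E[∑_{n=1}^{N} Xₙ | ℱ] ≤ M · E[N | ℱ] almost surely. -/

import Mathlib

open MeasureTheory ProbabilityTheory Filter Topology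

/-- Conditional version of Wald's identity. -/
theorem conditional_wald
    {Ω : Type*} {m0 : MeasurableSpace Ω} (P : Measure Ω) [IsProbabilityMeasure P]
    (F : MeasurableSpace Ω) (hF : F ≤ m0)
    (X : ℕ → Ω → ℝ) (hXnn : ∀ n ω, 0 ≤ X n ω) (hXint : ∀ n, Integrable (X n) P)
    (M : Ω → ℝ) (hM : StronglyMeasurable[F] M)
    (hbound : ∀ n, P[X n|F] ≤ᵐ[P] M)
    (N : Ω → ℕ) (hNpos : ∀ ω, 1 ≤ N ω)
    (hNint : Integrable (fun ω => (N ω : ℝ)) P)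
    (hSumInt : Integrable (fun ω => ∑ n ∈ Finset.Icc 1 (N ω), X n ω) P)
    (hfac : ∀ n : ℕ,
      P[fun ω => X n ω * ({ω' | n ≤ N ω'}.indicator (fun _ => (1 : ℝ))) ω|F]
        =ᵐ[P] fun ω =>
          (P[X n|F]) ω * (P[{ω' | n ≤ N ω'}.indicator (fun _ => (1 : ℝ))|F]) ω) :
    P[fun ω => ∑ n ∈ Finset.Icc 1 (N ω), X n ω|F]
      ≤ᵐ[P] fun ω => M ω * (P[fun ω' => (N ω' : ℝ)|F]) ω := by
  classical
  set I : ℕ → Ω → ℝ := fun n => ({ω' | n ≤ N ω'}.indicator (fun _ => (1 : ℝ))) with hIdef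
  set S : Ω → ℝ := fun ω => ∑ n ∈ Finset.Icc 1 (N ω), X n ω with hSdef
  set fs : ℕ → Ω → ℝ := fun k ω => ∑ n ∈ Finset.Icc 1 k, X n ω * I n ω with hfsdef
  -- basic facts about I
  have hIapp : ∀ n ω, I n ω = if n ≤ N ω then 1 else 0 := by
    intro n ω; simp [hIdef, Set.indicator_apply]
  have hInn : ∀ n ω, 0 ≤ I n ω := by
    intro n ω; rw [hIapp]; split <;> norm_num
  have hIle : ∀ n ω, I n ω ≤ 1 := by
    intro n ω; rw [hIapp]; split <;> norm_num
  -- a.e. strong measurability of I n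
  have hImeas : ∀ n, AEStronglyMeasurable[m0] (I n) P := by
    intro n
    refine ⟨({ω' | (n : ℝ) ≤ hNint.1.mk _ ω'}.indicator (fun _ => (1 : ℝ))), ?_, ?_⟩
    · exact stronglyMeasurable_const.indicator
        (measurableSet_le measurable_const hNint.1.measurable_mk)
    · filter_upwards [hNint.1.ae_eq_mk] with ω hω
      rw [hIapp]
      by_cases h : n ≤ N ω
      · have h' : (n : ℝ) ≤ hNint.1.mk _ ω := by rw [← hω]; exact_mod_cast h
        simp [h, Set.indicator_apply, h']
      · have h' : ¬ (n : ℝ) ≤ hNint.1.mk _ ω := by rw [← hω]; exact_mod_cast h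
        simp [h, Set.indicator_apply, h']
  have hI_int : ∀ n, Integrable (I n) P := by
    intro n
    refine (integrable_const (1 : ℝ)).mono (hImeas n) (ae_of_all _ fun ω => ?_)
    rw [Real.norm_eq_abs, abs_of_nonneg (hInn n ω)]
    simpa using hIle n ω
  have hXI_int : ∀ n, Integrable (fun ω => X n ω * I n ω) P := by
    intro n
    refine (hXint n).mono ((hXint n).1.mul (hImeas n)) (ae_of_all _ fun ω => ?_)
    rw [Real.norm_eq_abs, Real.norm_eq_abs, abs_of_nonneg (mul_nonneg (hXnn n ω) (hInn n ω)),
      abs_of_nonneg (hXnn n ω)]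
    calc X n ω * I n ω ≤ X n ω * 1 := mul_le_mul_of_nonneg_left (hIle n ω) (hXnn n ω)
      _ = X n ω := mul_one _
  -- structure of fs
  have hfilter : ∀ k ω, (Finset.Icc 1 k).filter (fun n => n ≤ N ω)
      = Finset.Icc 1 (min k (N ω)) := by
    intro k ω; ext n; simp only [Finset.mem_filter, Finset.mem_Icc]; omega
  have hfs_eq : ∀ k ω, fs k ω = ∑ n ∈ Finset.Icc 1 (min k (N ω)), X n ω := by
    intro k ω
    rw [hfsdef]
    simp only [hIapp, mul_ite, mul_one, mul_zero]
    rw [← Finset.sum_filter, hfilter]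
  have hfs_le : ∀ k ω, fs k ω ≤ S ω := by
    intro k ω
    rw [hfs_eq, hSdef]
    exact Finset.sum_le_sum_of_subset_of_nonneg
      (Finset.Icc_subset_Icc le_rfl (min_le_right _ _)) (fun n _ _ => hXnn n ω)
  have hfs_nn : ∀ k ω, 0 ≤ fs k ω := by
    intro k ω
    rw [hfs_eq]
    exact Finset.sum_nonneg fun n _ => hXnn n ω
  have hfs_tendsto : ∀ ω, Tendsto (fun k => fs k ω) atTop (𝓝 (S ω)) := by
    intro ω
    refine tendsto_atTop_of_eventually_const (i₀ := N ω) fun k hk => ?_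
    rw [hfs_eq, min_eq_right hk, hSdef]
  have hfs_int : ∀ k, Integrable (fs k) P := fun k =>
    integrable_finset_sum _ fun n _ => hXI_int n
  -- sum of indicators equals min
  have hsumI : ∀ (k : ℕ) (ω : Ω), ∑ n ∈ Finset.Icc 1 k, I n ω = ((min k (N ω) : ℕ) : ℝ) := by
    intro k ω
    simp only [hIapp]
    rw [← Finset.sum_filter, hfilter]
    simp [Nat.card_Icc]
  have hmin_int : ∀ k : ℕ, Integrable (fun ω => ((min k (N ω) : ℕ) : ℝ)) P := by
    intro k
    have : (fun ω => ((min k (N ω) : ℕ) : ℝ)) = fun ω => ∑ n ∈ Finset.Icc 1 k, I n ω := by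
      funext ω; rw [hsumI]
    rw [this]
    exact integrable_finset_sum _ fun n _ => hI_int n
  -- M is a.e. nonnegative
  have hMnn : 0 ≤ᵐ[P] M :=
    (condExp_nonneg (ae_of_all _ (hXnn 1)) : (0 : Ω → ℝ) ≤ᵐ[P] P[X 1|F]).trans (hbound 1)
  -- key inequality for each k
  have key : ∀ k : ℕ, P[fs k|F] ≤ᵐ[P] fun ω => M ω * (P[fun ω' => (N ω' : ℝ)|F]) ω := by
    intro k
    have h1 : P[fs k|F] =ᵐ[P] fun ω => ∑ n ∈ Finset.Icc 1 k,
        (P[fun ω' => X n ω' * I n ω'|F]) ω := by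
      have := condExp_finsetSum (μ := P) (m := F) (s := Finset.Icc 1 k)
        (f := fun n ω => X n ω * I n ω) (fun n _ => hXI_int n)
      have heq : fs k = ∑ n ∈ Finset.Icc 1 k, (fun ω => X n ω * I n ω) := by
        funext ω; rw [hfsdef]; simp
      rw [heq]
      refine this.trans ?_
      filter_upwards with ω
      simp
    have h4 : (fun ω => ∑ n ∈ Finset.Icc 1 k, (P[I n|F]) ω)
        =ᵐ[P] P[fun ω => ((min k (N ω) : ℕ) : ℝ)|F] := by
      have := condExp_finsetSum (μ := P) (m := F) (s := Finset.Icc 1 k)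
        (f := fun n => I n) (fun n _ => hI_int n)
      have heq : (fun ω => ((min k (N ω) : ℕ) : ℝ)) = ∑ n ∈ Finset.Icc 1 k, I n := by
        funext ω; rw [← hsumI]; simp
      rw [heq]
      refine EventuallyEq.symm (this.trans ?_)
      filter_upwards with ω
      simp
    have h5 : P[fun ω => ((min k (N ω) : ℕ) : ℝ)|F] ≤ᵐ[P] P[fun ω' => (N ω' : ℝ)|F] :=
      condExp_mono (hmin_int k) hNint
        (ae_of_all _ fun ω => Nat.cast_le.mpr (min_le_right k (N ω)))
    have hInnc : ∀ n, (0 : Ω → ℝ) ≤ᵐ[P] P[I n|F] := fun n =>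
      condExp_nonneg (ae_of_all _ (hInn n))
    -- combine
    have hae : ∀ᵐ ω ∂P, ∀ n : ℕ,
        (P[fun ω' => X n ω' * I n ω'|F]) ω ≤ M ω * (P[I n|F]) ω := by
      rw [ae_all_iff]
      intro n
      filter_upwards [hfac n, hbound n, hInnc n] with ω hfacω hbω hnnω
      calc (P[fun ω' => X n ω' * I n ω'|F]) ω
          = (P[X n|F]) ω * (P[I n|F]) ω := hfacω
        _ ≤ M ω * (P[I n|F]) ω := mul_le_mul_of_nonneg_right hbω hnnω
    filter_upwards [h1, h4, h5, hae, hMnn] with ω h1ω h4ω h5ω haeω hMω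
    calc (P[fs k|F]) ω = ∑ n ∈ Finset.Icc 1 k, (P[fun ω' => X n ω' * I n ω'|F]) ω := h1ω
      _ ≤ ∑ n ∈ Finset.Icc 1 k, M ω * (P[I n|F]) ω := Finset.sum_le_sum fun n _ => haeω n
      _ = M ω * ∑ n ∈ Finset.Icc 1 k, (P[I n|F]) ω := by rw [Finset.mul_sum]
      _ = M ω * (P[fun ω' => ((min k (N ω') : ℕ) : ℝ)|F]) ω := by rw [h4ω]
      _ ≤ M ω * (P[fun ω' => (N ω' : ℝ)|F]) ω := mul_le_mul_of_nonneg_left h5ω hMω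
  -- pass to the limit via dominated convergence for condExpL1
  have hL1 : Tendsto (fun k => condExpL1 hF P (fs k)) atTop (𝓝 (condExpL1 hF P S)) := by
    refine tendsto_condExpL1_of_dominated_convergence hF S (fun k => (hfs_int k).1)
      hSumInt (fun k => ae_of_all _ fun ω => ?_) (ae_of_all _ hfs_tendsto)
    rw [Real.norm_eq_abs, abs_of_nonneg (hfs_nn k ω)]
    exact hfs_le k ω
  have hmeas : TendstoInMeasure P (fun k => (condExpL1 hF P (fs k) : Ω → ℝ)) atTop
      (condExpL1 hF P S) := tendstoInMeasure_of_tendsto_Lp hL1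
  obtain ⟨ns, -, hns⟩ := hmeas.exists_seq_tendsto_ae
  have hcond_eq : ∀ k, P[fs k|F] =ᵐ[P] (condExpL1 hF P (fs k) : Ω → ℝ) := fun k =>
    condExp_ae_eq_condExpL1 hF (fs k)
  filter_upwards [hns, condExp_ae_eq_condExpL1 hF S,
    ae_all_iff.2 hcond_eq, ae_all_iff.2 key] with ω hnsω hSω hceqω hkeyω
  rw [hSdef] at hSω ⊢
  rw [hSω]
  refine le_of_tendsto hnsω (Eventually.of_forall fun i => ?_)
  rw [← hceqω (ns i)]
  exact hkeyω (ns i)
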